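/- Let k ≥ 2 be an integer. Then (1/k)·∑_{j=1}^{k−1} 1/(2 − 2cos(2πj/k)) = (1/12)(k − 1/k). -/

import Mathlib

open Real Finset

private lemma aux_mul_sum (w : ℂ) (n : ℕ) :
    (1 - w) * ∑ m ∈ range n, (m : ℂ) * w ^ m
      = (∑ m ∈ range n, w ^ m) - 1 - ((n : ℂ) - 1) * w ^ n := by
  induction n with
  | zero => simp
  | succ n ih =>
      rw [sum_range_succ, sum_range_succ, mul_add, ih]
      push_cast
      ring

private lemma aux_orth {k : ℕ} (w : ℂ) (hw : w ^ k = 1) :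
    ∑ j ∈ range k, w ^ j = if w = 1 then (k : ℂ) else 0 := by
  split_ifs with h
  · subst h; simp
  · rw [geom_sum_eq h, hw]; simp

private lemma aux_sum_id (n : ℕ) : (∑ m ∈ range n, (m : ℂ)) * 2 = n * (n - 1) := by
  induction n with
  | zero => simp
  | succ n ih => rw [sum_range_succ, add_mul, ih]; push_cast; ring

private lemma aux_sum_sq (n : ℕ) :
    (∑ m ∈ range n, (m : ℂ) ^ 2) * 6 = n * (n - 1) * (2 * n - 1) := by
  induction n with
  | zero => simp
  | succ n ih => rw [sum_range_succ, add_mul, ih]; push_cast; ring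

theorem stmt_8 (k : ℕ) (hk : 2 ≤ k) :
    ((1 : ℝ) / k) * ∑ j ∈ Finset.Icc 1 (k - 1),
        (1 / (2 - 2 * Real.cos (2 * Real.pi * j / k)))
      = (1 / 12) * ((k : ℝ) - 1 / k) := by
  have hk0 : k ≠ 0 := by omega
  have hkR : (k : ℝ) ≠ 0 := Nat.cast_ne_zero.mpr hk0
  have hkC : (k : ℂ) ≠ 0 := Nat.cast_ne_zero.mpr hk0
  set ζ : ℂ := Complex.exp (2 * Real.pi * Complex.I / k) with hζdef
  have hprim : IsPrimitiveRoot ζ k := Complex.isPrimitiveRoot_exp k hk0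
  have hζk : ζ ^ k = 1 := hprim.pow_eq_one
  have hζ0 : ζ ≠ 0 := Complex.exp_ne_zero _
  have habs1 : ‖ζ‖ = 1 := by
    rw [hζdef, show 2 * Real.pi * Complex.I / k = ((2 * Real.pi / k : ℝ) : ℂ) * Complex.I by
      push_cast; ring]
    exact Complex.norm_exp_ofReal_mul_I _
  have hconjζ : (starRingEnd ℂ) ζ = ζ⁻¹ := (Complex.inv_eq_conj habs1).symm
  set f : ℕ → ℂ := fun j => ∑ m ∈ range k, (m : ℂ) * (ζ ^ j) ^ m with hfdef
  have hfj : ∀ j : ℕ, ζ ^ j ≠ 1 → (1 - ζ ^ j) * f j = -(k : ℂ) := by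
    intro j hj
    have hwk : (ζ ^ j) ^ k = 1 := by rw [← pow_mul, mul_comm, pow_mul, hζk, one_pow]
    rw [hfdef]
    simp only
    rw [aux_mul_sum, aux_orth _ hwk, if_neg hj, hwk]
    ring
  have hterm : ∀ j ∈ Finset.Icc 1 (k - 1),
      ((1 / (2 - 2 * Real.cos (2 * Real.pi * j / k)) : ℝ) : ℂ)
        = f j * (starRingEnd ℂ) (f j) / (k : ℂ) ^ 2 := by
    intro j hj
    simp only [Finset.mem_Icc] at hj
    have hjne : ζ ^ j ≠ 1 := hprim.pow_ne_one_of_pos_of_lt (by omega) (by omega)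
    have hθ : ζ ^ j = Complex.exp (((2 * Real.pi * j / k : ℝ) : ℂ) * Complex.I) := by
      rw [hζdef, ← Complex.exp_nat_mul]
      congr 1
      push_cast
      ring
    have hre : (ζ ^ j).re = Real.cos (2 * Real.pi * j / k) := by
      rw [hθ]; exact Complex.exp_ofReal_mul_I_re _
    have habsj : ζ ^ j * (starRingEnd ℂ) (ζ ^ j) = 1 := by
      rw [Complex.mul_conj, Complex.normSq_eq_norm_sq, norm_pow, habs1]
      norm_num
    have hcos : ((2 - 2 * Real.cos (2 * Real.pi * j / k) : ℝ) : ℂ)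
        = (1 - ζ ^ j) * (1 - (starRingEnd ℂ) (ζ ^ j)) := by
      have h1 : (1 - ζ ^ j) * (1 - (starRingEnd ℂ) (ζ ^ j))
          = 1 - (ζ ^ j + (starRingEnd ℂ) (ζ ^ j)) + ζ ^ j * (starRingEnd ℂ) (ζ ^ j) := by ring
      rw [h1, Complex.add_conj, habsj, hre]
      push_cast
      ring
    have h1 : (1 : ℂ) - ζ ^ j ≠ 0 := sub_ne_zero.mpr fun h => hjne h.symm
    have h2 : (1 : ℂ) - (starRingEnd ℂ) (ζ ^ j) ≠ 0 := by
      intro h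
      apply h1
      have := congrArg (starRingEnd ℂ) h
      simpa using this
    have hfeq : f j = -(k : ℂ) / (1 - ζ ^ j) := by
      rw [eq_div_iff h1]; rw [mul_comm]; exact hfj j hjne
    have hfconj : (starRingEnd ℂ) (f j) = -(k : ℂ) / (1 - (starRingEnd ℂ) (ζ ^ j)) := by
      rw [hfeq]
      simp [map_div₀]
    have h2' : (1 : ℂ) - ((starRingEnd ℂ) ζ) ^ j ≠ 0 := by rw [← map_pow]; exact h2
    rw [Complex.ofReal_div, Complex.ofReal_one, hcos, hfconj, hfeq]
    field_simp [h1, h2, h2']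
  have horth : ∑ j ∈ range k, f j * (starRingEnd ℂ) (f j)
      = (k : ℂ) * ∑ m ∈ range k, (m : ℂ) ^ 2 := by
    have hstep : ∀ j, f j * (starRingEnd ℂ) (f j)
        = ∑ m ∈ range k, ∑ n ∈ range k,
            ((m : ℂ) * n) * (ζ ^ m * ((starRingEnd ℂ) ζ) ^ n) ^ j := by
      intro j
      rw [hfdef]
      simp only [map_sum, map_mul, map_pow, Complex.conj_natCast]
      rw [sum_mul_sum]
      refine sum_congr rfl fun m _ => sum_congr rfl fun n _ => ?_
      have e1 : (ζ ^ j) ^ m = (ζ ^ m) ^ j := by rw [← pow_mul, ← pow_mul, Nat.mul_comm]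
      have e2 : (((starRingEnd ℂ) ζ) ^ j) ^ n = (((starRingEnd ℂ) ζ) ^ n) ^ j := by
        rw [← pow_mul, ← pow_mul, Nat.mul_comm]
      rw [e1, e2, mul_pow]
      ring
    calc ∑ j ∈ range k, f j * (starRingEnd ℂ) (f j)
        = ∑ j ∈ range k, ∑ m ∈ range k, ∑ n ∈ range k,
            ((m : ℂ) * n) * (ζ ^ m * ((starRingEnd ℂ) ζ) ^ n) ^ j :=
          sum_congr rfl fun j _ => hstep j
      _ = ∑ m ∈ range k, ∑ n ∈ range k, ∑ j ∈ range k,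
            ((m : ℂ) * n) * (ζ ^ m * ((starRingEnd ℂ) ζ) ^ n) ^ j := by
          rw [sum_comm]
          refine sum_congr rfl fun m _ => ?_
          rw [sum_comm]
      _ = ∑ m ∈ range k, ∑ n ∈ range k,
            ((m : ℂ) * n) * (if m = n then (k : ℂ) else 0) := by
          refine sum_congr rfl fun m hm => sum_congr rfl fun n hn => ?_
          rw [← mul_sum]
          congr 1
          have hwk : (ζ ^ m * ((starRingEnd ℂ) ζ) ^ n) ^ k = 1 := by
            rw [mul_pow, ← pow_mul, mul_comm m k, pow_mul, hζk, one_pow,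
              ← pow_mul, mul_comm n k, pow_mul, ← map_pow, hζk]
            simp
          rw [aux_orth _ hwk]
          simp only [mem_range] at hm hn
          rcases eq_or_ne m n with h | h
          · subst h
            rw [if_pos rfl, if_pos]
            rw [hconjζ, inv_pow, mul_inv_eq_one₀ (pow_ne_zero _ hζ0)]
          · rw [if_neg h, if_neg]
            intro hcontra
            apply h
            apply hprim.pow_inj hm hn
            rw [hconjζ, inv_pow, mul_inv_eq_one₀ (pow_ne_zero _ hζ0)] at hcontra
            exact hcontra
      _ = ∑ m ∈ range k, (m : ℂ) ^ 2 * k := by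
          refine sum_congr rfl fun m hm => ?_
          simp only [mul_ite, mul_zero]
          rw [Finset.sum_ite_eq, if_pos hm]
          ring
      _ = (k : ℂ) * ∑ m ∈ range k, (m : ℂ) ^ 2 := by rw [← sum_mul]; ring
  have hIcc : Finset.Icc 1 (k - 1) = Finset.Ico 1 k := by
    ext x
    simp only [Finset.mem_Icc, Finset.mem_Ico]
    omega
  have h01 : ∑ j ∈ Finset.Ico 0 1, f j * (starRingEnd ℂ) (f j)
      = f 0 * (starRingEnd ℂ) (f 0) := by simp
  have hsplit : ∑ j ∈ range k, f j * (starRingEnd ℂ) (f j)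
      = f 0 * (starRingEnd ℂ) (f 0)
        + ∑ j ∈ Finset.Icc 1 (k - 1), f j * (starRingEnd ℂ) (f j) := by
    rw [hIcc, range_eq_Ico,
      ← Finset.sum_Ico_consecutive _ (Nat.zero_le 1) (by omega : 1 ≤ k), h01]
  have hf0conj : (starRingEnd ℂ) (f 0) = f 0 := by
    rw [hfdef]; simp
  have hA := aux_sum_id k
  have hB := aux_sum_sq k
  set A : ℂ := ∑ m ∈ range k, (m : ℂ) with hAdef
  set B : ℂ := ∑ m ∈ range k, (m : ℂ) ^ 2 with hBdef
  have hf0 : f 0 = A := by rw [hfdef, hAdef]; simp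
  have hT : ∑ j ∈ Finset.Icc 1 (k - 1), f j * (starRingEnd ℂ) (f j)
      = (k : ℂ) * B - A * A := by
    have h := hsplit
    rw [horth, hf0conj, hf0] at h
    linear_combination -h
  have hsumC : ∑ j ∈ Finset.Icc 1 (k - 1),
      ((1 / (2 - 2 * Real.cos (2 * Real.pi * j / k)) : ℝ) : ℂ)
      = ((k : ℂ) ^ 2 - 1) / 12 := by
    rw [sum_congr rfl hterm, ← sum_div, hT,
      div_eq_div_iff (pow_ne_zero 2 hkC) (by norm_num : (12 : ℂ) ≠ 0)]
    linear_combination (2 * (k : ℂ)) * hB + (-6 * A - 3 * (k : ℂ) * ((k : ℂ) - 1)) * hA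
  have hreal : ∑ j ∈ Finset.Icc 1 (k - 1), (1 / (2 - 2 * Real.cos (2 * Real.pi * j / k)))
      = ((k : ℝ) ^ 2 - 1) / 12 := by
    rw [← Complex.ofReal_sum] at hsumC
    have h3 : ((k : ℂ) ^ 2 - 1) / 12 = ((((k : ℝ) ^ 2 - 1) / 12 : ℝ) : ℂ) := by
      push_cast; ring
    rw [h3] at hsumC
    exact_mod_cast hsumC
  rw [hreal]
  field_simp
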